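/- arXiv:1711.04273 — 2 statements merged into one kernel-verified Lean document; each statement's English description precedes it below -/
import Mathlib

section
/- For every α ∈ (1/4, 1/2] there exist δ = δ(α) > 0 and n₀ = n₀(α) ∈ ℕ such that for all n ≥ n₀: every graphical degree sequence k* = (k_i*)_{i=1}^n satisfying (n−1)α ≤ k_i* ≤ (n−1)(1−α) for all 1 ≤ i ≤ n is δ-tame, i.e., its canonical probabilities satisfy δ ≤ p_ij* ≤ 1−δ for all 1 ≤ i ≠ j ≤ n. -/
open Filter Finset Asymptotics

/-- A simple undirected graph on `n` labelled vertices, given by its adjacency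
indicators `g i j ∈ {0,1}` (as `Bool`), symmetric and with no loops. -/
abbrev LabGraph (n : ℕ) : Type :=
  {g : Fin n → Fin n → Bool // (∀ i j, g i j = g j i) ∧ ∀ i, g i i = false}

noncomputable section

/-- The degree `k_i(G) = Σ_{j ≠ i} g_ij(G)` of vertex `i` in the graph `G`. -/
def degSeq {n : ℕ} (G : LabGraph n) (i : Fin n) : ℕ :=
  ∑ j ∈ Finset.univ.filter (fun j => j ≠ i), if G.1 i j then 1 else 0

/-- Canonical connection probabilities `p*_ij = x_i x_j / (1 + x_i x_j)`. -/
def pStar {n : ℕ} (x : Fin n → ℝ) (i j : Fin n) : ℝ := x i * x j / (1 + x i * x j)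

/-- The parameters `x` realise the degree sequence `k` as canonical averages:
`Σ_{j ≠ i} p*_ij = k_i` for all `i`. -/
def fitsDegrees {n : ℕ} (x : Fin n → ℝ) (k : Fin n → ℕ) : Prop :=
  ∀ i, ∑ j ∈ Finset.univ.filter (fun j => j ≠ i), pStar x i j = (k i : ℝ)

/-- Canonical ensemble probability
`P_can(G) = Π_{i<j} p_ij^{g_ij(G)} (1-p_ij)^{1-g_ij(G)}`. -/
def Pcan {n : ℕ} (p : Fin n → Fin n → ℝ) (G : LabGraph n) : ℝ :=
  ∏ ij ∈ Finset.univ.filter (fun ij : Fin n × Fin n => ij.1 < ij.2),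
    if G.1 ij.1 ij.2 then p ij.1 ij.2 else 1 - p ij.1 ij.2

/-- `Ω_k`: the number of graphs with degree sequence `k`. -/
def numGraphs (n : ℕ) (k : Fin n → ℕ) : ℕ :=
  (Finset.univ.filter (fun G : LabGraph n => degSeq G = k)).card

/-- Microcanonical ensemble: uniform on the graphs with degree sequence `k`. -/
def Pmic {n : ℕ} (k : Fin n → ℕ) (G : LabGraph n) : ℝ :=
  if degSeq G = k then ((numGraphs n k : ℝ))⁻¹ else 0

/-- Relative entropy `S_n(P_mic | P_can) = Σ_G P_mic(G) log (P_mic(G)/P_can(G))`. -/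
def relEnt (n : ℕ) (k : Fin n → ℕ) (p : Fin n → Fin n → ℝ) : ℝ :=
  ∑ G : LabGraph n, Pmic k G * Real.log (Pmic k G / Pcan p G)

/-- `f̄_n = (1/(2n)) Σ_{i=1}^n log (k_i (n-1-k_i) / n)`. -/
def fbar (n : ℕ) (k : Fin n → ℕ) : ℝ :=
  (1 / (2 * (n : ℝ))) * ∑ i, Real.log ((k i : ℝ) * ((n : ℝ) - 1 - (k i : ℝ)) / (n : ℝ))

/-- The canonical covariance matrix `Q` of the degrees:
`q_ij = p_ij (1 - p_ij)` for `i ≠ j` and `q_ii = Σ_{l ≠ i} p_il (1 - p_il)`. -/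
def Qmat {n : ℕ} (p : Fin n → Fin n → ℝ) : Matrix (Fin n) (Fin n) ℝ :=
  Matrix.of fun i j =>
    if i = j then ∑ l ∈ Finset.univ.filter (fun l => l ≠ i), p i l * (1 - p i l)
    else p i j * (1 - p i j)

/-- δ-tameness: `δ ≤ p_ij ≤ 1 - δ` for all `i ≠ j`. -/
def deltaTame {n : ℕ} (δ : ℝ) (p : Fin n → Fin n → ℝ) : Prop :=
  ∀ i j : Fin n, i ≠ j → δ ≤ p i j ∧ p i j ≤ 1 - δ


/-- Auxiliary arithmetic lemma: the two-class constraint system is infeasible for `α > 1/4`. -/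
lemma tame_aux (α η ε P N u v : ℝ)
    (hα1 : 1/4 < α) (hα2 : α ≤ 1/2)
    (hη : η = ε/4) (hε : ε = α - 1/4)
    (hPα : α ≤ P) (hP1 : P ≤ 1 - α)
    (hu : 0 ≤ u) (hv : 0 ≤ v) (huv : N - 2 ≤ u + v)
    (hNpos : 0 < N) (hNε : 1 < N * ε)
    (hIA : N * P + (1 - η - P) * u ≤ N * (1 - α))
    (hIB : N * α ≤ N * P - (P - η) * v) : False := by
  have hη0 : 0 < η := by rw [hη, hε]; linarith
  have hPη : 0 ≤ P - η := by rw [hη, hε]; linarith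
  have h1ηP : 0 ≤ 1 - η - P := by rw [hη, hε]; linarith
  have h1 : (1 - η - P) * u ≤ (1 - α - P) * N := by nlinarith [hIA]
  have h2 : (P - η) * v ≤ (P - α) * N := by nlinarith [hIB]
  have h3 := mul_le_mul_of_nonneg_left h1 hPη
  have h4 := mul_le_mul_of_nonneg_left h2 h1ηP
  have h5 := mul_le_mul_of_nonneg_left huv (mul_nonneg hPη h1ηP)
  have hW : N * (P^2 - P + α - 2*α*η + η^2) ≤ 2*((P-η)*(1-η-P)) := by linarith
  have hW2 : (3/4)*ε ≤ P^2 - P + α - 2*α*η + η^2 := by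
    nlinarith [sq_nonneg (P - 1/2), sq_nonneg η,
      mul_nonneg hη0.le (by linarith : (0:ℝ) ≤ 1 - 2*α)]
  have hq : (P-η)*(1-η-P) ≤ 1/4 := by
    have h1η : (0:ℝ) ≤ 1 - η := by rw [hη, hε]; linarith
    nlinarith [sq_nonneg (1 - 2*η - 2*P), mul_nonneg hη0.le h1η]
  have h6 : N * ((3/4)*ε) ≤ N * (P^2 - P + α - 2*α*η + η^2) :=
    mul_le_mul_of_nonneg_left hW2 hNpos.le
  linarith

/-- Monotonicity of `y ↦ y/(1+y)` on nonnegative reals. -/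
lemma pdiv_mono {y z : ℝ} (hy : 0 ≤ y) (hyz : y ≤ z) : y/(1+y) ≤ z/(1+z) := by
  rw [div_le_div_iff₀ (by linarith) (by linarith)]
  nlinarith

lemma odds_of_le_p {a y : ℝ} (ha : 0 < 1 - a) (hy : 0 < y) (h : a ≤ y/(1+y)) :
    a/(1-a) ≤ y := by
  rw [le_div_iff₀ (by linarith)] at h
  rw [div_le_iff₀ ha]
  nlinarith

lemma odds_of_p_le {a y : ℝ} (ha : 0 < a) (hy : 0 < y) (h : y/(1+y) ≤ 1-a) :
    y ≤ (1-a)/a := by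
  rw [div_le_iff₀ (by linarith)] at h
  rw [le_div_iff₀ ha]
  nlinarith

lemma p_of_odds_ge {e y : ℝ} (he : 0 < e) (hy : 0 < y) (h : (1-e)/e ≤ y) :
    1-e ≤ y/(1+y) := by
  rw [div_le_iff₀ he] at h
  rw [le_div_iff₀ (by linarith)]
  nlinarith

lemma p_of_odds_le {e y : ℝ} (he0 : 0 < e) (he1 : e < 1) (hy : 0 < y) (h : y ≤ e/(1-e)) :
    y/(1+y) ≤ e := by
  rw [le_div_iff₀ (by linarith)] at h
  rw [div_le_iff₀ (by linarith)]
  nlinarith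

lemma p_lb {r K y : ℝ} (hr : 0 < r) (hK : 0 < K) (hy : 0 < y) (h : r ≤ K^2 * y) :
    r/(r+K^2) ≤ y/(1+y) := by
  rw [div_le_div_iff₀ (add_pos hr (pow_pos hK 2)) (by linarith)]
  nlinarith

lemma p_ub {r K y : ℝ} (hr : 0 < r) (hK : 0 < K) (hy : 0 < y) (h : y * r ≤ K^2) :
    y/(1+y) ≤ 1 - r/(r+K^2) := by
  have hrK : (0:ℝ) < r + K^2 := add_pos hr (pow_pos hK 2)
  have h1 : 1 - r/(r+K^2) = K^2/(r+K^2) := by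
    have h0 : r + K^2 ≠ 0 := ne_of_gt hrK
    field_simp
    ring
  rw [h1, div_le_div_iff₀ (by linarith) hrK]
  nlinarith

lemma aux_Kxb {K t s : ℝ} (hK : 1 ≤ K) (ht : 0 < t) (h : K^2 * t ≤ s) : K * t ≤ s := by
  nlinarith [mul_nonneg (mul_nonneg (by linarith : (0:ℝ) ≤ K) ht.le)
    (by linarith : (0:ℝ) ≤ K - 1)]

lemma aux_cover {K t s w : ℝ} (hK : 0 < K) (h1 : w ≤ K * t) (h2 : K^2 * t ≤ s) :
    K * w ≤ s := by
  nlinarith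

set_option maxHeartbeats 1000000 in
/-- For every `α ∈ (1/4, 1/2]` there exist `δ = δ(α) > 0` and
`n₀ = n₀(α)` such that for all `n ≥ n₀`, every graphical degree sequence with
`(n-1)α ≤ k_i ≤ (n-1)(1-α)` for all `i` is δ-tame. -/
theorem tame_from_degree_bounds :
    ∀ α : ℝ, 1 / 4 < α → α ≤ 1 / 2 →
      ∃ δ : ℝ, 0 < δ ∧ ∃ n₀ : ℕ, ∀ n : ℕ, n₀ ≤ n →
        ∀ (k : Fin n → ℕ) (x : Fin n → ℝ),
          (∃ G : LabGraph n, degSeq G = k) →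
          (∀ i, 0 < x i) → fitsDegrees x k →
          (∀ i, ((n : ℝ) - 1) * α ≤ (k i : ℝ) ∧ (k i : ℝ) ≤ ((n : ℝ) - 1) * (1 - α)) →
          deltaTame δ (pStar x) := by
  intro α hα1 hα2
  have hα0 : (0:ℝ) < α := by linarith
  have h1α : (0:ℝ) < 1 - α := by linarith
  set ε : ℝ := α - 1/4 with hεdef
  have hε : 0 < ε := by rw [hεdef]; linarith
  set η : ℝ := ε / 4 with hηdef
  have hη0 : 0 < η := by rw [hηdef]; linarith
  have hηα : η < α := by rw [hηdef, hεdef]; linarith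
  have hηh : η < 1/2 := by rw [hηdef, hεdef]; linarith
  have hα0' : α ≠ 0 := ne_of_gt hα0
  have h1α' : (1 - α) ≠ 0 := ne_of_gt h1α
  have hη0' : η ≠ 0 := ne_of_gt hη0
  have h1η' : (1 - η) ≠ 0 := by
    have h : (0:ℝ) < 1 - η := by linarith
    exact ne_of_gt h
  set r : ℝ := α / (1 - α) with hrdef
  have hr0 : 0 < r := by rw [hrdef]; positivity
  set K : ℝ := ((1 - α) / α) * ((1 - η) / η) with hKdef
  have hK0 : 0 < K := by
    rw [hKdef]
    exact mul_pos (div_pos h1α hα0) (div_pos (by linarith) hη0)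
  have hK1 : 1 ≤ K := by
    rw [hKdef]
    have h1 : 1 ≤ (1 - α)/α := by rw [le_div_iff₀ hα0]; linarith
    have h2 : 1 ≤ (1 - η)/η := by rw [le_div_iff₀ hη0]; linarith
    nlinarith
  refine ⟨r / (r + K^2), div_pos hr0 (add_pos hr0 (pow_pos hK0 2)), ⌈1/ε⌉₊ + 2, ?_⟩
  intro n hn k x _ hx hfit hk
  classical
  have hn2 : 2 ≤ n := le_trans (by omega) hn
  have hNpos : (0:ℝ) < (n:ℝ) - 1 := by
    have h : (2:ℝ) ≤ (n:ℝ) := by exact_mod_cast hn2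
    linarith
  have hNε : 1 < ((n:ℝ) - 1) * ε := by
    have h1 : (1/ε : ℝ) ≤ (⌈1/ε⌉₊ : ℝ) := Nat.le_ceil _
    have h2 : ((⌈1/ε⌉₊ + 2 : ℕ) : ℝ) ≤ (n:ℝ) := by exact_mod_cast hn
    push_cast at h2
    have h3 : 1/ε < (n:ℝ) - 1 := by linarith
    calc (1:ℝ) = (1/ε) * ε := by field_simp
    _ < ((n:ℝ)-1) * ε := mul_lt_mul_of_pos_right h3 hε
  have huniv : (Finset.univ : Finset (Fin n)).Nonempty := ⟨⟨0, by omega⟩, Finset.mem_univ _⟩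
  obtain ⟨a, -, hamax⟩ := Finset.exists_max_image Finset.univ x huniv
  obtain ⟨b, -, hbmin⟩ := Finset.exists_min_image Finset.univ x huniv
  have hamax' : ∀ j, x j ≤ x a := fun j => hamax j (Finset.mem_univ j)
  have hbmin' : ∀ j, x b ≤ x j := fun j => hbmin j (Finset.mem_univ j)
  have hxa : 0 < x a := hx a
  have hxb : 0 < x b := hx b
  have hcard : ∀ i : Fin n, (Finset.univ.filter (fun j => j ≠ i)).card = n - 1 := by
    intro i
    rw [Finset.filter_ne', Finset.card_erase_of_mem (Finset.mem_univ i), Finset.card_univ,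
      Fintype.card_fin]
  have hcastn : ((n - 1 : ℕ) : ℝ) = (n:ℝ) - 1 := by
    rw [Nat.cast_sub (by omega : 1 ≤ n), Nat.cast_one]
  set P : ℝ := x a * x b / (1 + x a * x b) with hPdef
  have hyab : 0 < x a * x b := mul_pos hxa hxb
  have hPα : α ≤ P := by
    have hsum : (k b : ℝ) ≤ ((n:ℝ) - 1) * P := by
      rw [← hfit b]
      have hle : ∀ j ∈ Finset.univ.filter (fun j => j ≠ b), pStar x b j ≤ P := by
        intro j _
        have h1 : x b * x j ≤ x a * x b := by
          rw [mul_comm (x a)]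
          exact mul_le_mul_of_nonneg_left (hamax' j) hxb.le
        have h2 := pdiv_mono (mul_nonneg hxb.le (hx j).le) h1
        simpa [pStar, hPdef] using h2
      calc ∑ j ∈ Finset.univ.filter (fun j => j ≠ b), pStar x b j
          ≤ ∑ _j ∈ Finset.univ.filter (fun j => j ≠ b), P := Finset.sum_le_sum hle
        _ = ((n:ℝ)-1) * P := by
            rw [Finset.sum_const, hcard b, nsmul_eq_mul, hcastn]
    have h := le_trans (hk b).1 hsum
    exact le_of_mul_le_mul_left h hNpos
  have hP1 : P ≤ 1 - α := by
    have hsum : ((n:ℝ) - 1) * P ≤ (k a : ℝ) := by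
      rw [← hfit a]
      have hle : ∀ j ∈ Finset.univ.filter (fun j => j ≠ a), P ≤ pStar x a j := by
        intro j _
        have h1 : x a * x b ≤ x a * x j := mul_le_mul_of_nonneg_left (hbmin' j) hxa.le
        have h2 := pdiv_mono hyab.le h1
        simpa [pStar, hPdef] using h2
      calc ((n:ℝ)-1) * P = ∑ _j ∈ Finset.univ.filter (fun j => j ≠ a), P := by
            rw [Finset.sum_const, hcard a, nsmul_eq_mul, hcastn]
        _ ≤ ∑ j ∈ Finset.univ.filter (fun j => j ≠ a), pStar x a j := Finset.sum_le_sum hle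
    have h := le_trans hsum (hk a).2
    exact le_of_mul_le_mul_left h hNpos
  have hyr : r ≤ x a * x b := by
    rw [hrdef]
    exact odds_of_le_p h1α hyab (hPdef ▸ hPα)
  have hyR : x a * x b ≤ (1 - α)/α := odds_of_p_le hα0 hyab (hPdef ▸ hP1)
  have hkey : x a ≤ K^2 * x b := by
    by_contra hcon
    push_neg at hcon
    set A' := Finset.univ.filter (fun j => K * x b ≤ x j) with hA'def
    set B' := Finset.univ.filter (fun j => K * x j ≤ x a) with hB'def
    have hKxb : K * x b ≤ x a := aux_Kxb hK1 hxb hcon.le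
    have haA : a ∈ A' := by
      rw [hA'def]
      exact Finset.mem_filter.2 ⟨Finset.mem_univ _, hKxb⟩
    have hbB : b ∈ B' := by
      rw [hB'def]
      exact Finset.mem_filter.2 ⟨Finset.mem_univ _, hKxb⟩
    have hcardAB : (n:ℝ) ≤ (A'.card : ℝ) + (B'.card : ℝ) := by
      have hsub : (Finset.univ : Finset (Fin n)) ⊆ A' ∪ B' := by
        intro j _
        rcases le_or_gt (K * x b) (x j) with h | h
        · exact Finset.mem_union_left _
            (by rw [hA'def]; exact Finset.mem_filter.2 ⟨Finset.mem_univ _, h⟩)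
        · have hx2 : K * x j ≤ x a := aux_cover hK0 h.le hcon.le
          exact Finset.mem_union_right _
            (by rw [hB'def]; exact Finset.mem_filter.2 ⟨Finset.mem_univ _, hx2⟩)
      have h1 : n ≤ (A' ∪ B').card := by
        calc n = (Finset.univ : Finset (Fin n)).card := by
              rw [Finset.card_univ, Fintype.card_fin]
          _ ≤ (A' ∪ B').card := Finset.card_le_card hsub
      have h2 := Finset.card_union_le A' B'
      exact_mod_cast le_trans h1 h2
    have hA1 : 1 ≤ A'.card := Finset.card_pos.2 ⟨a, haA⟩
    have hB1 : 1 ≤ B'.card := Finset.card_pos.2 ⟨b, hbB⟩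
    have hKr : K * r = (1-η)/η := by
      rw [hKdef, hrdef]
      field_simp
    have hKR : K * (η/(1-η)) = (1-α)/α := by
      rw [hKdef]
      field_simp
    -- Row a lower bound
    have indA : ∀ j ∈ Finset.univ.filter (fun j => j ≠ a),
        P + (1 - η - P) * (if j ∈ A' then (1:ℝ) else 0) ≤ pStar x a j := by
      intro j _
      by_cases hj : j ∈ A'
      · rw [if_pos hj, mul_one]
        have hxj : K * x b ≤ x j := (Finset.mem_filter.1 hj).2
        have hodds : (1 - η)/η ≤ x a * x j := by
          have h1 : K * r ≤ K * (x a * x b) := mul_le_mul_of_nonneg_left hyr hK0.le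
          have h2 : K * (x a * x b) ≤ x a * x j := by
            calc K * (x a * x b) = x a * (K * x b) := by ring
            _ ≤ x a * x j := mul_le_mul_of_nonneg_left hxj hxa.le
          linarith [hKr.ge]
        have h3 : 1 - η ≤ pStar x a j := by
          have := p_of_odds_ge hη0 (mul_pos hxa (hx j)) hodds
          simpa [pStar] using this
        linarith
      · rw [if_neg hj, mul_zero, add_zero]
        have h1 : x a * x b ≤ x a * x j := mul_le_mul_of_nonneg_left (hbmin' j) hxa.le
        have h2 := pdiv_mono hyab.le h1
        simpa [pStar, hPdef] using h2
    have hsumIndA : ∑ j ∈ Finset.univ.filter (fun j => j ≠ a), (if j ∈ A' then (1:ℝ) else 0)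
        = (A'.card : ℝ) - 1 := by
      rw [Finset.sum_boole]
      have he : (Finset.univ.filter (fun j => j ≠ a)).filter (fun j => j ∈ A') = A'.erase a := by
        ext j
        simp only [Finset.mem_filter, Finset.mem_erase, Finset.mem_univ, true_and]
        try tauto
      rw [he, Finset.card_erase_of_mem haA, Nat.cast_sub hA1, Nat.cast_one]
    have hIA : ((n:ℝ)-1) * P + (1 - η - P) * ((A'.card:ℝ) - 1) ≤ ((n:ℝ)-1) * (1-α) := by
      have h1 : ∑ j ∈ Finset.univ.filter (fun j => j ≠ a),
          (P + (1 - η - P) * (if j ∈ A' then (1:ℝ) else 0)) ≤ (k a : ℝ) := by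
        rw [← hfit a]
        exact Finset.sum_le_sum indA
      have h2 : ∑ j ∈ Finset.univ.filter (fun j => j ≠ a),
          (P + (1 - η - P) * (if j ∈ A' then (1:ℝ) else 0))
          = ((n:ℝ)-1) * P + (1 - η - P) * ((A'.card:ℝ) - 1) := by
        rw [Finset.sum_add_distrib, ← Finset.mul_sum, hsumIndA, Finset.sum_const, hcard a,
          nsmul_eq_mul, hcastn]
      rw [h2] at h1
      linarith [(hk a).2]
    -- Row b upper bound
    have indB : ∀ j ∈ Finset.univ.filter (fun j => j ≠ b),
        pStar x b j ≤ P - (P - η) * (if j ∈ B' then (1:ℝ) else 0) := by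
      intro j _
      by_cases hj : j ∈ B'
      · rw [if_pos hj, mul_one]
        have hxj : K * x j ≤ x a := (Finset.mem_filter.1 hj).2
        have h1 : K * (x b * x j) ≤ (1-α)/α := by
          calc K * (x b * x j) = x b * (K * x j) := by ring
          _ ≤ x b * x a := mul_le_mul_of_nonneg_left hxj hxb.le
          _ = x a * x b := mul_comm _ _
          _ ≤ (1-α)/α := hyR
        have h2 : x b * x j ≤ η/(1-η) :=
          le_of_mul_le_mul_left (by rw [hKR]; exact h1) hK0
        have h3 : pStar x b j ≤ η := by
          have := p_of_odds_le hη0 (by linarith) (mul_pos hxb (hx j)) h2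
          simpa [pStar] using this
        linarith
      · rw [if_neg hj, mul_zero, sub_zero]
        have h1 : x b * x j ≤ x a * x b := by
          rw [mul_comm (x a)]
          exact mul_le_mul_of_nonneg_left (hamax' j) hxb.le
        have h2 := pdiv_mono (mul_nonneg hxb.le (hx j).le) h1
        simpa [pStar, hPdef] using h2
    have hsumIndB : ∑ j ∈ Finset.univ.filter (fun j => j ≠ b), (if j ∈ B' then (1:ℝ) else 0)
        = (B'.card : ℝ) - 1 := by
      rw [Finset.sum_boole]
      have he : (Finset.univ.filter (fun j => j ≠ b)).filter (fun j => j ∈ B') = B'.erase b := by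
        ext j
        simp only [Finset.mem_filter, Finset.mem_erase, Finset.mem_univ, true_and]
        try tauto
      rw [he, Finset.card_erase_of_mem hbB, Nat.cast_sub hB1, Nat.cast_one]
    have hIB : ((n:ℝ)-1) * α ≤ ((n:ℝ)-1) * P - (P - η) * ((B'.card:ℝ) - 1) := by
      have h1 : (k b : ℝ) ≤ ∑ j ∈ Finset.univ.filter (fun j => j ≠ b),
          (P - (P - η) * (if j ∈ B' then (1:ℝ) else 0)) := by
        rw [← hfit b]
        exact Finset.sum_le_sum indB
      have h2 : ∑ j ∈ Finset.univ.filter (fun j => j ≠ b),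
          (P - (P - η) * (if j ∈ B' then (1:ℝ) else 0))
          = ((n:ℝ)-1) * P - (P - η) * ((B'.card:ℝ) - 1) := by
        rw [Finset.sum_sub_distrib, ← Finset.mul_sum, hsumIndB, Finset.sum_const, hcard b,
          nsmul_eq_mul, hcastn]
      rw [h2] at h1
      linarith [(hk b).1]
    -- final contradiction
    have hA1' : (1:ℝ) ≤ (A'.card : ℝ) := by exact_mod_cast hA1
    have hB1' : (1:ℝ) ≤ (B'.card : ℝ) := by exact_mod_cast hB1
    exact tame_aux α η ε P ((n:ℝ)-1) ((A'.card:ℝ)-1) ((B'.card:ℝ)-1) hα1 hα2 hηdef hεdef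
      hPα hP1 (by linarith) (by linarith) (by linarith) hNpos hNε hIA hIB
  -- conclusion
  intro i j hij
  have hbi := hbmin' i
  have hbj := hbmin' j
  have hai := hamax' i
  have haj := hamax' j
  have hxi := hx i
  have hxj := hx j
  have hK2 : (0:ℝ) ≤ K^2 := (pow_pos hK0 2).le
  have hxij : (0:ℝ) < x i * x j := mul_pos hxi hxj
  have hylow : r ≤ K^2 * (x i * x j) := by
    calc r ≤ x a * x b := hyr
    _ ≤ (K^2 * x b) * x b := mul_le_mul_of_nonneg_right hkey hxb.le
    _ = K^2 * (x b * x b) := by ring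
    _ ≤ K^2 * (x i * x j) :=
        mul_le_mul_of_nonneg_left (mul_le_mul hbi hbj hxb.le hxi.le) hK2
  have hyhigh : x i * x j ≤ K^2 * ((1-α)/α) := by
    calc x i * x j ≤ x a * x a := mul_le_mul hai haj hxj.le hxa.le
    _ ≤ (K^2 * x b) * x a := mul_le_mul_of_nonneg_right hkey hxa.le
    _ = K^2 * (x a * x b) := by ring
    _ ≤ K^2 * ((1-α)/α) := mul_le_mul_of_nonneg_left hyR hK2
  have hRr : (1-α)/α * r = 1 := by rw [hrdef]; field_simp
  constructor
  · have := p_lb hr0 hK0 hxij hylow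
    simpa [pStar] using this
  · have h2 : x i * x j * r ≤ K^2 := by
      calc x i * x j * r ≤ (K^2 * ((1-α)/α)) * r := mul_le_mul_of_nonneg_right hyhigh hr0.le
      _ = K^2 * ((1-α)/α * r) := by ring
      _ = K^2 := by rw [hRr, mul_one]
    have := p_ub hr0 hK0 hxij h2
    simpa [pStar] using this
end
end

section
/- Let k* be a δ-tame degree sequence on n ≥ 2 vertices with canonical covariance matrix Q, and let A = Q_D^{-1} Q_off, where Q_D = diag(Q) and Q_off = Q − Q_D, so that a_ij = q_ij/q_ii for i ≠ j and a_ii = 0. Then every eigenvalue λ of A is real and satisfies −1 + ((n−2)/(n−1))·(δ/(1−δ))² ≤ λ ≤ 1; in particular, for n ≥ 3 every eigenvalue of A is strictly greater than −1. -/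
open Filter Finset Asymptotics

noncomputable section

/-- The matrix `A = Q_D⁻¹ Q_off`, with entries `a_ij = q_ij / q_ii` for `i ≠ j`
and `a_ii = 0`. -/
def Amat {n : ℕ} (p : Fin n → Fin n → ℝ) : Matrix (Fin n) (Fin n) ℝ :=
  Matrix.of fun i j => if i = j then 0 else Qmat p i j / Qmat p i i

/-! ### Auxiliary lemmas for the eigenvalue bounds -/

lemma aux_sum_ite_ne {n : ℕ} (i : Fin n) (f : Fin n → ℝ) :
    ∑ j, (if i = j then 0 else f j) = (∑ j, f j) - f i := by
  have h : ∀ j : Fin n, (if i = j then 0 else f j) = f j - (if i = j then f j else 0) := by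
    intro j; by_cases hij : i = j <;> simp [hij]
  rw [Finset.sum_congr rfl fun j _ => h j, Finset.sum_sub_distrib, Finset.sum_ite_eq]
  simp

lemma aux_double_swap' {n : ℕ} (Q : Fin n → Fin n → ℝ) (hsym : ∀ i j, Q i j = Q j i)
    (f g : Fin n → ℝ) :
    ∑ i, ∑ j, Q i j * (f i * g j) = ∑ i, ∑ j, Q i j * (g i * f j) := by
  rw [Finset.sum_comm]
  exact Finset.sum_congr rfl fun i _ => Finset.sum_congr rfl fun j _ => by
    rw [hsym j i]; ring

lemma aux_double_swap {n : ℕ} (Q : Fin n → Fin n → ℝ) (hsym : ∀ i j, Q i j = Q j i)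
    (f : Fin n → ℝ) :
    ∑ i, ∑ j, Q i j * f j = ∑ i, (∑ j, Q i j) * f i := by
  rw [Finset.sum_comm]
  refine Finset.sum_congr rfl fun j _ => ?_
  rw [← Finset.sum_mul]
  congr 1
  exact Finset.sum_congr rfl fun i _ => hsym i j

lemma aux_quad_upper {n : ℕ} (Q : Fin n → Fin n → ℝ) (hsym : ∀ i j, Q i j = Q j i)
    (hnn : ∀ i j, 0 ≤ Q i j) (t : Fin n → ℝ) :
    ∑ i, ∑ j, Q i j * (t i * t j) ≤ ∑ i, (∑ j, Q i j) * t i ^ 2 := by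
  have key : 0 ≤ ∑ i, ∑ j, Q i j * (t i - t j) ^ 2 :=
    Finset.sum_nonneg fun i _ => Finset.sum_nonneg fun j _ =>
      mul_nonneg (hnn i j) (sq_nonneg _)
  have expand : ∑ i, ∑ j, Q i j * (t i - t j) ^ 2
      = 2 * (∑ i, (∑ j, Q i j) * t i ^ 2) - 2 * (∑ i, ∑ j, Q i j * (t i * t j)) := by
    have e1 : ∀ i j : Fin n, Q i j * (t i - t j) ^ 2
        = Q i j * t i ^ 2 - 2 * (Q i j * (t i * t j)) + Q i j * t j ^ 2 := by
      intro i j; ring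
    simp only [e1, Finset.sum_add_distrib, Finset.sum_sub_distrib, ← Finset.mul_sum]
    rw [aux_double_swap Q hsym (fun i => t i ^ 2)]
    have h4 : ∀ i : Fin n, ∑ j, Q i j * t i ^ 2 = (∑ j, Q i j) * t i ^ 2 := fun i =>
      (Finset.sum_mul ..).symm
    simp only [h4]
    ring
  linarith [key, expand.le, expand.ge]

lemma aux_quad_lower {n : ℕ} (hn : 2 ≤ n) (Q : Fin n → Fin n → ℝ) (m : ℝ) (hm0 : 0 ≤ m)
    (hsym : ∀ i j, Q i j = Q j i) (hdiag : ∀ i, Q i i = 0)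
    (hm : ∀ i j, i ≠ j → m ≤ Q i j) (t : Fin n → ℝ) :
    m * ((n : ℝ) - 2) * (∑ i, t i ^ 2) - ∑ i, (∑ j, Q i j) * t i ^ 2
      ≤ ∑ i, ∑ j, Q i j * (t i * t j) := by
  have e1 : ∑ i, ∑ j, Q i j * (t i + t j) ^ 2
      = 2 * (∑ i, (∑ j, Q i j) * t i ^ 2) + 2 * (∑ i, ∑ j, Q i j * (t i * t j)) := by
    have e : ∀ i j : Fin n, Q i j * (t i + t j) ^ 2
        = Q i j * t i ^ 2 + 2 * (Q i j * (t i * t j)) + Q i j * t j ^ 2 := by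
      intro i j; ring
    simp only [e, Finset.sum_add_distrib, ← Finset.mul_sum]
    rw [aux_double_swap Q hsym (fun i => t i ^ 2)]
    have h4 : ∀ i : Fin n, ∑ j, Q i j * t i ^ 2 = (∑ j, Q i j) * t i ^ 2 := fun i =>
      (Finset.sum_mul ..).symm
    simp only [h4]
    ring
  have e2 : m * (∑ i, ∑ j, (t i + t j) ^ 2 - ∑ i, (2 * t i) ^ 2)
      ≤ ∑ i, ∑ j, Q i j * (t i + t j) ^ 2 := by
    have step : ∀ i : Fin n, m * ((∑ j, (t i + t j) ^ 2) - (2 * t i) ^ 2)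
        ≤ ∑ j, Q i j * (t i + t j) ^ 2 := by
      intro i
      have h5 : (∑ j, (t i + t j) ^ 2) - (2 * t i) ^ 2
          = ∑ j, (if i = j then 0 else (t i + t j) ^ 2) := by
        rw [aux_sum_ite_ne i (fun j => (t i + t j) ^ 2)]
        congr 1
        ring
      rw [h5, Finset.mul_sum]
      apply Finset.sum_le_sum
      intro j _
      by_cases hij : i = j
      · simp [← hij, hdiag]
      · simp only [if_neg hij]
        exact mul_le_mul_of_nonneg_right (hm i j hij) (sq_nonneg _)
    calc m * (∑ i, ∑ j, (t i + t j) ^ 2 - ∑ i, (2 * t i) ^ 2)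
        = ∑ i, m * ((∑ j, (t i + t j) ^ 2) - (2 * t i) ^ 2) := by
          rw [← Finset.sum_sub_distrib, Finset.mul_sum]
      _ ≤ _ := Finset.sum_le_sum fun i _ => step i
  have e3 : ∑ i, ∑ j, (t i + t j) ^ 2
      = 2 * (n : ℝ) * (∑ i, t i ^ 2) + 2 * (∑ i, t i) ^ 2 := by
    have einner : ∀ i : Fin n, ∑ j, (t i + t j) ^ 2
        = (n : ℝ) * t i ^ 2 + 2 * (t i * ∑ j, t j) + ∑ j, t j ^ 2 := by
      intro i
      have e : ∀ j : Fin n, (t i + t j) ^ 2 = t i ^ 2 + 2 * (t i * t j) + t j ^ 2 := by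
        intro j; ring
      simp only [e, Finset.sum_add_distrib, Finset.sum_const, Finset.card_univ,
        Fintype.card_fin, nsmul_eq_mul, ← Finset.mul_sum]
    simp only [einner, Finset.sum_add_distrib, Finset.sum_const, Finset.card_univ,
      Fintype.card_fin, nsmul_eq_mul, ← Finset.mul_sum, ← Finset.sum_mul]
    ring
  have e4 : ∑ i, (2 * t i) ^ 2 = 4 * ∑ i, t i ^ 2 := by
    rw [Finset.mul_sum]; exact Finset.sum_congr rfl fun i _ => by ring
  have hsq : 0 ≤ (∑ i, t i) ^ 2 := sq_nonneg _
  have hn2 : (2 : ℝ) ≤ (n : ℝ) := by exact_mod_cast hn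
  nlinarith [e1, e2, e3, e4, mul_nonneg hm0 hsq]

/-- every eigenvalue `λ` of `A = Q_D⁻¹ Q_off` is real and satisfies
`-1 + ((n-2)/(n-1)) (δ/(1-δ))² ≤ λ ≤ 1`; in particular, for `n ≥ 3` every
eigenvalue of `A` is strictly greater than `-1`. -/
theorem tame_A_eigenvalue_bounds
    (n : ℕ) (hn : 2 ≤ n)
    (δ : ℝ) (hδ0 : 0 < δ) (hδhalf : δ ≤ 1 / 2)
    (k : Fin n → ℕ) (x : Fin n → ℝ)
    (hxpos : ∀ i, 0 < x i)
    (hfit : fitsDegrees x k)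
    (htame : deltaTame δ (pStar x)) :
    ∀ μ : ℂ, (((Amat (pStar x)).map (fun r : ℝ => (r : ℂ))).charpoly).IsRoot μ →
      μ.im = 0 ∧
      (-1 + (((n : ℝ) - 2) / ((n : ℝ) - 1)) * (δ / (1 - δ)) ^ 2 ≤ μ.re ∧ μ.re ≤ 1) ∧
      (3 ≤ n → -1 < μ.re) := by
  classical
  intro μ hroot
  set p := pStar x with hp
  have h1δ : 0 < 1 - δ := by linarith
  set m : ℝ := δ * (1 - δ) with hmdef
  have hm0 : 0 < m := mul_pos hδ0 h1δ
  set Qc : Fin n → Fin n → ℝ := fun i j => if i = j then 0 else p i j * (1 - p i j) with hQc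
  have hpsym : ∀ i j, p i j = p j i := by
    intro i j; simp [hp, pStar, mul_comm]
  have hQsym : ∀ i j, Qc i j = Qc j i := by
    intro i j
    by_cases hij : i = j
    · simp [hQc, hij]
    · simp only [hQc, if_neg hij, if_neg (Ne.symm hij), hpsym i j]
  have hQdiag : ∀ i, Qc i i = 0 := fun i => by simp [hQc]
  have hQm : ∀ i j, i ≠ j → m ≤ Qc i j := by
    intro i j hij
    obtain ⟨h1, h2⟩ := htame i j hij
    simp only [hQc, if_neg hij]
    nlinarith
  have hQM : ∀ i j, Qc i j ≤ 1 / 4 := by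
    intro i j
    by_cases hij : i = j
    · simp [hQc, hij]
    · obtain ⟨h1, h2⟩ := htame i j hij
      simp only [hQc, if_neg hij]
      nlinarith [sq_nonneg (1 - 2 * p i j)]
  have hQnn : ∀ i j, 0 ≤ Qc i j := by
    intro i j
    by_cases hij : i = j
    · simp [hQc, hij]
    · exact le_trans hm0.le (hQm i j hij)
  haveI : Nontrivial (Fin n) := Fin.nontrivial_iff_two_le.mpr hn
  have hd_pos : ∀ i, 0 < ∑ j, Qc i j := by
    intro i
    obtain ⟨j0, hj0⟩ := exists_ne i
    exact Finset.sum_pos' (fun j _ => hQnn i j)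
      ⟨j0, Finset.mem_univ _, lt_of_lt_of_le hm0 (hQm i j0 (Ne.symm hj0))⟩
  have hd_le : ∀ i, ∑ j, Qc i j ≤ ((n : ℝ) - 1) / 4 := by
    intro i
    have h1 : ∑ j, Qc i j ≤ ∑ j : Fin n, (if i = j then 0 else (1:ℝ)/4) := by
      apply Finset.sum_le_sum
      intro j _
      by_cases hij : i = j
      · simp [hQc, hij]
      · simp only [if_neg hij]; exact hQM i j
    have h2 : ∑ j : Fin n, (if i = j then 0 else (1:ℝ)/4) = (n : ℝ) / 4 - 1 / 4 := by
      rw [aux_sum_ite_ne i (fun _ => (1:ℝ)/4)]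
      simp [Finset.sum_const, Finset.card_univ]
      ring
    rw [h2] at h1
    linarith
  -- relation with Qmat
  have hQmat_diag : ∀ i, Qmat p i i = ∑ j, Qc i j := by
    intro i
    show (if i = i then ∑ l ∈ Finset.univ.filter (fun l => l ≠ i), p i l * (1 - p i l)
      else p i i * (1 - p i i)) = _
    rw [if_pos rfl, Finset.sum_filter]
    refine Finset.sum_congr rfl fun j _ => ?_
    by_cases hij : i = j
    · simp [hQc, hij]
    · simp [hQc, hij, Ne.symm hij]
  have hQmat_off : ∀ i j, i ≠ j → Qmat p i j = Qc i j := by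
    intro i j hij
    show (if i = j then _ else p i j * (1 - p i j)) = _
    rw [if_neg hij]
    simp [hQc, hij]
  -- extract an eigenvector over ℂ
  set A' : Matrix (Fin n) (Fin n) ℂ := (Amat p).map (fun r : ℝ => (r : ℂ)) with hA'
  have hdet : (μ • (1 : Matrix (Fin n) (Fin n) ℂ) - A').det = 0 := by
    have h0 : Polynomial.eval μ A'.charpoly = 0 := hroot
    rw [Matrix.charpoly] at h0
    have heq : Polynomial.eval μ (Matrix.charmatrix A').det
        = ((Matrix.charmatrix A').map (Polynomial.evalRingHom μ)).det := by
      rw [Polynomial.eval, ← Polynomial.coe_eval₂RingHom, RingHom.map_det]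
      rfl
    rw [heq] at h0
    convert h0 using 2
    ext i j
    by_cases hij : i = j <;>
      simp [Matrix.charmatrix_apply, Matrix.diagonal, Matrix.one_apply, hij]
  obtain ⟨v, hv0, hv⟩ := Matrix.exists_mulVec_eq_zero_iff.mpr hdet
  have hAv : A'.mulVec v = μ • v := by
    have h := hv
    rw [Matrix.sub_mulVec, sub_eq_zero, Matrix.smul_mulVec, Matrix.one_mulVec] at h
    exact h.symm
  -- row identity with Qc
  have hrow : ∀ i, ∑ j, ((Qc i j : ℝ) : ℂ) * v j = ((∑ j, Qc i j : ℝ) : ℂ) * (μ * v i) := by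
    intro i
    have hdne : ((∑ j, Qc i j : ℝ) : ℂ) ≠ 0 := by
      exact_mod_cast (hd_pos i).ne'
    have h1 : ∑ j, A' i j * v j = μ * v i := by
      have := congrFun hAv i
      simpa [Matrix.mulVec, dotProduct, Pi.smul_apply, smul_eq_mul] using this
    have h2 : ∀ j, ((Qc i j : ℝ) : ℂ) = ((∑ l, Qc i l : ℝ) : ℂ) * A' i j := by
      intro j
      by_cases hij : i = j
      · simp [hA', Matrix.map_apply, Amat, ← hij, hQdiag i]
      · have : Amat p i j = Qc i j / (∑ l, Qc i l) := by
          show (if i = j then 0 else Qmat p i j / Qmat p i i) = _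
          rw [if_neg hij, hQmat_off i j hij, hQmat_diag i]
        have hdne2 : (∑ l, ((Qc i l : ℝ) : ℂ)) ≠ 0 := by
          rw [← Complex.ofReal_sum]
          exact_mod_cast (hd_pos i).ne'
        simp only [hA', Matrix.map_apply, this]
        push_cast
        rw [eq_comm, mul_comm]
        exact div_mul_cancel₀ _ hdne2
    calc ∑ j, ((Qc i j : ℝ) : ℂ) * v j
        = ∑ j, ((∑ l, Qc i l : ℝ) : ℂ) * (A' i j * v j) := by
          refine Finset.sum_congr rfl fun j _ => ?_
          rw [h2 j]; ring
      _ = ((∑ l, Qc i l : ℝ) : ℂ) * ∑ j, A' i j * v j := by rw [Finset.mul_sum]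
      _ = _ := by rw [h1]
  -- real and imaginary parts
  set a : Fin n → ℝ := fun i => (v i).re with ha
  set b : Fin n → ℝ := fun i => (v i).im with hb
  set T : ℝ := ∑ i, (∑ j, Qc i j) * (a i ^ 2 + b i ^ 2) with hT
  have hkey : ∑ i, ∑ j, ((Qc i j : ℝ) : ℂ) * ((starRingEnd ℂ) (v i) * v j)
      = μ * ((T : ℝ) : ℂ) := by
    have step1 : ∀ i, ∑ j, ((Qc i j : ℝ) : ℂ) * ((starRingEnd ℂ) (v i) * v j)
        = (starRingEnd ℂ) (v i) * ∑ j, ((Qc i j : ℝ) : ℂ) * v j := by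
      intro i
      rw [Finset.mul_sum]
      exact Finset.sum_congr rfl fun j _ => by ring
    have step2 : ∀ i, (starRingEnd ℂ) (v i) * v i = (((a i ^ 2 + b i ^ 2 : ℝ)) : ℂ) := by
      intro i
      rw [mul_comm, Complex.mul_conj]
      congr 1
      rw [Complex.normSq_apply, ha, hb]
      ring
    calc ∑ i, ∑ j, ((Qc i j : ℝ) : ℂ) * ((starRingEnd ℂ) (v i) * v j)
        = ∑ i, (starRingEnd ℂ) (v i) * (((∑ j, Qc i j : ℝ) : ℂ) * (μ * v i)) := by
          refine Finset.sum_congr rfl fun i _ => ?_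
          rw [step1 i, hrow i]
      _ = μ * ∑ i, ((∑ j, Qc i j : ℝ) : ℂ) * ((starRingEnd ℂ) (v i) * v i) := by
          rw [Finset.mul_sum]
          exact Finset.sum_congr rfl fun i _ => by ring
      _ = μ * ((T : ℝ) : ℂ) := by
          congr 1
          simp only [step2]
          rw [hT]
          push_cast
          rfl
  have hterm_re : ∀ i j, (((Qc i j : ℝ) : ℂ) * ((starRingEnd ℂ) (v i) * v j)).re
      = Qc i j * (a i * a j + b i * b j) := by
    intro i j
    simp only [Complex.mul_re, Complex.mul_im, Complex.ofReal_re, Complex.ofReal_im,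
      Complex.conj_re, Complex.conj_im, ha, hb]
    ring
  have hterm_im : ∀ i j, (((Qc i j : ℝ) : ℂ) * ((starRingEnd ℂ) (v i) * v j)).im
      = Qc i j * (a i * b j) - Qc i j * (b i * a j) := by
    intro i j
    simp only [Complex.mul_re, Complex.mul_im, Complex.ofReal_re, Complex.ofReal_im,
      Complex.conj_re, Complex.conj_im, ha, hb]
    ring
  have hTpos : 0 < T := by
    have hvex : ∃ i, v i ≠ 0 := Function.ne_iff.mp hv0
    obtain ⟨i0, hi0⟩ := hvex
    have hpos : 0 < a i0 ^ 2 + b i0 ^ 2 := by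
      have := Complex.normSq_pos.mpr hi0
      rw [Complex.normSq_apply] at this
      simp only [ha, hb]
      nlinarith
    refine Finset.sum_pos' (fun i _ => mul_nonneg (hd_pos i).le (by positivity)) ?_
    exact ⟨i0, Finset.mem_univ _, mul_pos (hd_pos i0) hpos⟩
  -- imaginary part: μ is real
  have him : μ.im = 0 := by
    have hL : (∑ i, ∑ j, ((Qc i j : ℝ) : ℂ) * ((starRingEnd ℂ) (v i) * v j)).im = 0 := by
      rw [Complex.im_sum]
      have : ∀ i, (∑ j, ((Qc i j : ℝ) : ℂ) * ((starRingEnd ℂ) (v i) * v j)).im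
          = ∑ j, (Qc i j * (a i * b j) - Qc i j * (b i * a j)) := by
        intro i
        rw [Complex.im_sum]
        exact Finset.sum_congr rfl fun j _ => hterm_im i j
      simp only [this, Finset.sum_sub_distrib]
      rw [aux_double_swap' Qc hQsym a b]
      ring
    have hR : (μ * ((T : ℝ) : ℂ)).im = μ.im * T := by
      simp [Complex.mul_im]
    rw [hkey] at hL
    rw [hR] at hL
    exact (mul_eq_zero.mp hL).resolve_right hTpos.ne'
  -- real part identity
  have hre : μ.re * T = ∑ i, ∑ j, Qc i j * (a i * a j) + ∑ i, ∑ j, Qc i j * (b i * b j) := by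
    have hL : (∑ i, ∑ j, ((Qc i j : ℝ) : ℂ) * ((starRingEnd ℂ) (v i) * v j)).re
        = ∑ i, ∑ j, Qc i j * (a i * a j) + ∑ i, ∑ j, Qc i j * (b i * b j) := by
      rw [Complex.re_sum]
      have : ∀ i, (∑ j, ((Qc i j : ℝ) : ℂ) * ((starRingEnd ℂ) (v i) * v j)).re
          = ∑ j, (Qc i j * (a i * a j) + Qc i j * (b i * b j)) := by
        intro i
        rw [Complex.re_sum]
        refine Finset.sum_congr rfl fun j _ => ?_
        rw [hterm_re i j]; ring
      simp only [this, Finset.sum_add_distrib]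
    have hR : (μ * ((T : ℝ) : ℂ)).re = μ.re * T := by
      simp [Complex.mul_re]
    rw [← hL, hkey, hR]
  -- split T
  have hTsplit : T = ∑ i, (∑ j, Qc i j) * a i ^ 2 + ∑ i, (∑ j, Qc i j) * b i ^ 2 := by
    rw [hT, ← Finset.sum_add_distrib]
    exact Finset.sum_congr rfl fun i _ => by ring
  -- upper bound
  have hupper : μ.re ≤ 1 := by
    have h1 := aux_quad_upper Qc hQsym hQnn a
    have h2 := aux_quad_upper Qc hQsym hQnn b
    have : μ.re * T ≤ 1 * T := by
      rw [hre, one_mul, hTsplit]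
      linarith
    exact le_of_mul_le_mul_right this hTpos
  -- lower bound
  set r : ℝ := (δ / (1 - δ)) ^ 2 with hr
  set c : ℝ := (((n : ℝ) - 2) / ((n : ℝ) - 1)) * r with hc
  have hn2 : (2 : ℝ) ≤ (n : ℝ) := by exact_mod_cast hn
  have hn1 : (0 : ℝ) < (n : ℝ) - 1 := by linarith
  have hr0 : 0 < r := by positivity
  have hc0 : 0 ≤ c := by
    apply mul_nonneg _ hr0.le
    apply div_nonneg <;> linarith
  set S2 : ℝ := ∑ i, a i ^ 2 + ∑ i, b i ^ 2 with hS2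
  have hS2nn : 0 ≤ S2 := by
    rw [hS2]
    have : 0 ≤ ∑ i, a i ^ 2 := Finset.sum_nonneg fun i _ => sq_nonneg _
    have : 0 ≤ ∑ i, b i ^ 2 := Finset.sum_nonneg fun i _ => sq_nonneg _
    positivity
  have hTS : T ≤ ((n : ℝ) - 1) / 4 * S2 := by
    rw [hT, hS2]
    have : ∑ i, (∑ j, Qc i j) * (a i ^ 2 + b i ^ 2)
        ≤ ∑ i, ((n : ℝ) - 1) / 4 * (a i ^ 2 + b i ^ 2) :=
      Finset.sum_le_sum fun i _ =>
        mul_le_mul_of_nonneg_right (hd_le i) (by positivity)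
    calc ∑ i, (∑ j, Qc i j) * (a i ^ 2 + b i ^ 2)
        ≤ ∑ i, ((n : ℝ) - 1) / 4 * (a i ^ 2 + b i ^ 2) := this
      _ = ((n : ℝ) - 1) / 4 * (∑ i, a i ^ 2 + ∑ i, b i ^ 2) := by
          simp only [mul_add, Finset.mul_sum, Finset.sum_add_distrib]
  have hr4m : r ≤ 4 * m := by
    rw [hr, hmdef, div_pow, div_le_iff₀ (by positivity)]
    nlinarith [sq_nonneg (1 - 2 * δ), sq_nonneg δ, hδ0.le, hδhalf]
  have hcT : c * T ≤ m * ((n : ℝ) - 2) * S2 := by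
    calc c * T ≤ c * (((n : ℝ) - 1) / 4 * S2) := mul_le_mul_of_nonneg_left hTS hc0
      _ = (c * (((n : ℝ) - 1) / 4)) * S2 := by ring
      _ = ((n : ℝ) - 2) * r / 4 * S2 := by
          have hcc : c * (((n : ℝ) - 1) / 4) = ((n : ℝ) - 2) * r / 4 := by
            rw [hc]
            field_simp
          rw [hcc]
      _ ≤ m * ((n : ℝ) - 2) * S2 := by
          apply mul_le_mul_of_nonneg_right _ hS2nn
          have hn2' : (0:ℝ) ≤ (n:ℝ) - 2 := by linarith
          have hmm := mul_le_mul_of_nonneg_left hr4m hn2'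
          linarith
  have hlower : -1 + c ≤ μ.re := by
    have h1 := aux_quad_lower hn Qc m hm0.le hQsym hQdiag hQm a
    have h2 := aux_quad_lower hn Qc m hm0.le hQsym hQdiag hQm b
    have hge : (c - 1) * T ≤ μ.re * T := by
      rw [hre]
      have hx : m * ((n : ℝ) - 2) * S2
          = m * ((n : ℝ) - 2) * (∑ i, a i ^ 2) + m * ((n : ℝ) - 2) * (∑ i, b i ^ 2) := by
        rw [hS2]; ring
      have hmain : m * ((n : ℝ) - 2) * S2 - T
          ≤ ∑ i, ∑ j, Qc i j * (a i * a j) + ∑ i, ∑ j, Qc i j * (b i * b j) := by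
        rw [hTsplit, hx]
        linarith [h1, h2]
      linarith [hmain, hcT]
    have := le_of_mul_le_mul_right hge hTpos
    linarith
  refine ⟨him, ⟨hlower, hupper⟩, ?_⟩
  intro hn3
  have hn3' : (3 : ℝ) ≤ (n : ℝ) := by exact_mod_cast hn3
  have hcpos : 0 < c := by
    rw [hc]
    apply mul_pos _ hr0
    apply div_pos <;> linarith
  linarith

end
end
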